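/- Let G=(V,E) be a cubic graph and let (H,λ) be the temporal graph obtained from G (and a proper 4-edge-coloring c of G) by the Construction. Let M be a 2-temporal matching of (H,λ). Then there exists a 2-temporal matching M' of (H,λ) with |M'| = |M| such that for every edge {u,v} ∈ E, M' contains at most one of the two time edges ({u_0,u_1},2) and ({v_0,v_1},2). -/

import Mathlib

variable {V : Type*}

/-- The underlying (static) graph of a temporal graph given by its time-labeling. -/
def ugraph (lab : Sym2 V → Finset ℕ) : SimpleGraph V where
  Adj x y := x ≠ y ∧ (lab s(x, y)).Nonempty
  symm := by
    constructor
    intro x y h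
    exact ⟨h.1.symm, by rw [Sym2.eq_swap]; exact h.2⟩
  loopless := by constructor; intro x h; exact h.1 rfl

/-- `(e, t)` is a time edge of the temporal graph given by `lab`. -/
def IsTimeEdge (lab : Sym2 V → Finset ℕ) (p : Sym2 V × ℕ) : Prop :=
  ¬ p.1.IsDiag ∧ p.2 ∈ lab p.1

/-- Two time edges are Δ-independent: edges disjoint or labels at least Δ apart. -/
def DIndep (Δ : ℕ) (p q : Sym2 V × ℕ) : Prop :=
  (∀ v, v ∈ p.1 → v ∉ q.1) ∨ Δ ≤ ((p.2 : ℤ) - (q.2 : ℤ)).natAbs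

/-- A Δ-temporal matching. -/
def IsTM (lab : Sym2 V → Finset ℕ) (Δ : ℕ) (M : Finset (Sym2 V × ℕ)) : Prop :=
  (∀ p ∈ M, IsTimeEdge lab p) ∧ ∀ p ∈ M, ∀ q ∈ M, p ≠ q → DIndep Δ p q

/-- μ_Δ: maximum cardinality of a Δ-temporal matching. -/
noncomputable def tmu (lab : Sym2 V → Finset ℕ) (Δ : ℕ) : ℕ :=
  sSup {k | ∃ M : Finset (Sym2 V × ℕ), IsTM lab Δ M ∧ M.card = k}

/-- The temporal graph has lifetime `T`. -/
def HasLifetime (lab : Sym2 V → Finset ℕ) (T : ℕ) : Prop :=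
  (∀ e, ∀ t ∈ lab e, 1 ≤ t ∧ t ≤ T) ∧ ∃ e : Sym2 V, ¬ e.IsDiag ∧ T ∈ lab e

/-- The snapshot at time `t`. -/
def tsnapshot (lab : Sym2 V → Finset ℕ) (t : ℕ) : SimpleGraph V where
  Adj x y := x ≠ y ∧ t ∈ lab s(x, y)
  symm := by
    constructor
    intro x y h
    exact ⟨h.1.symm, by rw [Sym2.eq_swap]; exact h.2⟩
  loopless := by constructor; intro x h; exact h.1 rfl

/-- 𝒢|_S : keep only time edges with label in `S`. -/
def trestrict (lab : Sym2 V → Finset ℕ) (S : Finset ℕ) : Sym2 V → Finset ℕ :=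
  fun e => lab e ∩ S

/-- A finite matching of a static graph. -/
def IsMatchingF (G : SimpleGraph V) (R : Finset (Sym2 V)) : Prop :=
  (∀ e ∈ R, e ∈ G.edgeSet) ∧ ∀ e ∈ R, ∀ e' ∈ R, e ≠ e' → ∀ v, v ∈ e → v ∉ e'

/-- ν(G): maximum cardinality of a matching. -/
noncomputable def matchNum (G : SimpleGraph V) : ℕ :=
  sSup {k | ∃ R : Finset (Sym2 V), IsMatchingF G R ∧ R.card = k}

/-- An independent set of a static graph. -/
def IsIndepF (G : SimpleGraph V) (S : Finset V) : Prop :=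
  ∀ u ∈ S, ∀ v ∈ S, ¬ G.Adj u v

/-- α(G): maximum cardinality of an independent set. -/
noncomputable def indepNum (G : SimpleGraph V) : ℕ :=
  sSup {k | ∃ S : Finset V, IsIndepF G S ∧ S.card = k}

/-- The Δ-temporal line graph: vertices are the time edges, two distinct time edges are
adjacent iff the edges share a vertex and the labels are less than Δ apart. -/
def tline (lab : Sym2 V → Finset ℕ) (Δ : ℕ) :
    SimpleGraph {p : Sym2 V × ℕ // IsTimeEdge lab p} where
  Adj p q := p ≠ q ∧ (∃ v, v ∈ p.1.1 ∧ v ∈ q.1.1) ∧ ((p.1.2 : ℤ) - (q.1.2 : ℤ)).natAbs < Δ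
  symm := by
    constructor
    rintro p q ⟨hne, ⟨v, hv1, hv2⟩, hlt⟩
    exact ⟨hne.symm, ⟨v, hv2, hv1⟩, by omega⟩
  loopless := by constructor; rintro p ⟨hne, -⟩; exact hne rfl

/-- The side `α ∈ {0,1}` (encoded as a `Bool`) of an edge `e`, determined by
`α ≡ c(e) (mod 2)` where `c(e) ∈ {1,2,3,4}` is the color of `e`. -/
def aV {V : Type*} (c : Sym2 V → ℕ) (e : Sym2 V) : Bool := c e % 2 == 1

/-- The time slot of the two edges incident to `w_e`: 1 if `c(e) ∈ {1,2}`, 3 if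
`c(e) ∈ {3,4}`. -/
def tE {V : Type*} (c : Sym2 V → ℕ) (e : Sym2 V) : ℕ := if c e ≤ 2 then 1 else 3

/-- `c` is a proper 4-edge-coloring of `G` with colors in `{1,2,3,4}`. -/
def ProperEC {V : Type*} (G : SimpleGraph V) (c : Sym2 V → ℕ) : Prop :=
  (∀ e ∈ G.edgeSet, 1 ≤ c e ∧ c e ≤ 4) ∧
  ∀ e ∈ G.edgeSet, ∀ e' ∈ G.edgeSet, e ≠ e' → (∃ v, v ∈ e ∧ v ∈ e') → c e ≠ c e'

/-- The time-labeling `lab` (on the vertex set `(V × Bool) ⊕ Sym2 V`, where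
`(v, false)` plays the role of `v₀`, `(v, true)` of `v₁`, and `Sum.inr e` of `w_e`)
is exactly the temporal graph `(H, λ)` of the Construction applied to `G` and `c`:
every edge `{v₀,v₁}` has label set `{2}`; for every edge `e` of `G` and each endpoint
`u ∈ e`, the edge `{w_e, u_α}` has label set `{tE c e}`; and no other pair carries
any label. -/
def IsConstruction {V : Type*} (G : SimpleGraph V) (c : Sym2 V → ℕ)
    (lab : Sym2 ((V × Bool) ⊕ Sym2 V) → Finset ℕ) : Prop :=
  (∀ v : V, lab s(Sum.inl (v, false), Sum.inl (v, true)) = {2}) ∧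
  (∀ e ∈ G.edgeSet, ∀ u, u ∈ e →
    lab s(Sum.inr e, Sum.inl (u, aV c e)) = {tE c e}) ∧
  (∀ f : Sym2 ((V × Bool) ⊕ Sym2 V), (lab f).Nonempty →
    (∃ v : V, f = s(Sum.inl (v, false), Sum.inl (v, true))) ∨
    (∃ e ∈ G.edgeSet, ∃ u, u ∈ e ∧ f = s(Sum.inr e, Sum.inl (u, aV c e))))

/-- For a cubic graph `G` with a proper 4-edge-coloring `c` and the
temporal graph `(H,λ)` of the Construction, every 2-temporal matching `M` of `(H,λ)`
can be transformed into a 2-temporal matching `M'` with `|M'| = |M|` such that for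
every edge `{u,v}` of `G`, `M'` contains at most one of `({u₀,u₁},2)` and
`({v₀,v₁},2)`. -/
theorem stmt4 {V : Type*} [Fintype V] [DecidableEq V]
    (G : SimpleGraph V) [DecidableRel G.Adj] (hcubic : ∀ v : V, G.degree v = 3)
    (c : Sym2 V → ℕ) (hc : ProperEC G c)
    (lab : Sym2 ((V × Bool) ⊕ Sym2 V) → Finset ℕ) (hcons : IsConstruction G c lab)
    (M : Finset (Sym2 ((V × Bool) ⊕ Sym2 V) × ℕ)) (hM : IsTM lab 2 M) :
    ∃ M' : Finset (Sym2 ((V × Bool) ⊕ Sym2 V) × ℕ),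
      IsTM lab 2 M' ∧ M'.card = M.card ∧
      ∀ u v : V, G.Adj u v →
        ¬((s(Sum.inl (u, false), Sum.inl (u, true)), 2) ∈ M' ∧
          (s(Sum.inl (v, false), Sum.inl (v, true)), 2) ∈ M') := by
  classical
  obtain ⟨hlab2, hlabE, hclass⟩ := hcons
  obtain ⟨hMte, hMind⟩ := hM
  -- notation
  let vert : V → Sym2 ((V × Bool) ⊕ Sym2 V) × ℕ :=
    fun v => (s(Sum.inl (v, false), Sum.inl (v, true)), 2)
  -- every time edge of M has time 1, 2 or 3
  suffices H : ∀ n (M : Finset (Sym2 ((V × Bool) ⊕ Sym2 V) × ℕ)),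
      (M.filter (fun p => p.2 = 2)).card ≤ n → IsTM lab 2 M →
      ∃ M', IsTM lab 2 M' ∧ M'.card = M.card ∧
        ∀ u v : V, G.Adj u v → ¬(vert u ∈ M' ∧ vert v ∈ M') by
    obtain ⟨M', h1, h2, h3⟩ := H _ M le_rfl ⟨hMte, hMind⟩
    exact ⟨M', h1, h2, h3⟩
  clear hMte hMind M
  intro n
  induction n with
  | zero =>
    intro M hcard hM
    by_cases hbad : ∃ u v : V, G.Adj u v ∧ vert u ∈ M ∧ vert v ∈ M
    · obtain ⟨u, v, hadj, hu, hv⟩ := hbad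
      have h1 : vert u ∈ M.filter (fun p => p.2 = 2) := Finset.mem_filter.2 ⟨hu, rfl⟩
      have := Finset.card_pos.2 ⟨_, h1⟩
      omega
    · exact ⟨M, hM, rfl, fun u v h hc => hbad ⟨u, v, h, hc.1, hc.2⟩⟩
  | succ n ih =>
    intro M hcard hM
    obtain ⟨hMte, hMind⟩ := hM
    by_cases hbad : ∃ u v : V, G.Adj u v ∧ vert u ∈ M ∧ vert v ∈ M
    swap
    · exact ⟨M, ⟨hMte, hMind⟩, rfl, fun u v h hc => hbad ⟨u, v, h, hc.1, hc.2⟩⟩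
    obtain ⟨u, v, hadj, hu, hv⟩ := hbad
    set e : Sym2 V := s(u, v) with he_def
    have he : e ∈ G.edgeSet := hadj
    have hue : u ∈ e := Sym2.mem_mk_left u v
    have htE : tE c e = 1 ∨ tE c e = 3 := by unfold tE; split <;> simp
    set star : Sym2 ((V × Bool) ⊕ Sym2 V) × ℕ :=
      (s(Sum.inr e, Sum.inl (u, aV c e)), tE c e) with hstar_def
    have hstarlab : lab star.1 = {tE c e} := hlabE e he u hue
    have hstarte : IsTimeEdge lab star := by
      constructor
      · simp [hstar_def, Sym2.mk_isDiag_iff]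
      · rw [hstarlab]; exact Finset.mem_singleton_self _
    -- time of every time edge of M is 1, 2 or 3
    have hqtime : ∀ q ∈ M, q.2 = 1 ∨ q.2 = 2 ∨ q.2 = 3 := by
      intro q hq
      have ht := (hMte q hq).2
      rcases hclass q.1 ⟨q.2, ht⟩ with ⟨v', hv'⟩ | ⟨e', he', u', hu', hf⟩
      · rw [hv', hlab2] at ht
        simp at ht; omega
      · rw [hf, hlabE e' he' u' hu'] at ht
        simp at ht
        have : tE c e' = 1 ∨ tE c e' = 3 := by unfold tE; split <;> simp
        omega
    have hstaru : Sum.inl (u, aV c e) ∈ (vert u).1 := by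
      show Sum.inl (u, aV c e) ∈ s(Sum.inl (u, false), Sum.inl (u, true))
      cases h : aV c e <;> simp
    have hstar_notM : star ∉ M := by
      intro hs
      have hne : star ≠ vert u := by
        intro h
        have := congrArg Prod.snd h
        simp [hstar_def] at this
        simp only [vert] at this
        omega
      rcases hMind star hs (vert u) hu hne with hd | ht2
      · exact hd (Sum.inl (u, aV c e)) (by simp [hstar_def]) hstaru
      · simp only [hstar_def, vert] at ht2; omega
    -- the star edge is disjoint from everything in M besides vert u
    have hdis : ∀ q ∈ M.erase (vert u), ∀ x ∈ star.1, x ∉ q.1 := by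
      intro q hq x hx hxq
      have hqM := Finset.mem_of_mem_erase hq
      have hqne : q ≠ vert u := Finset.ne_of_mem_erase hq
      have ht := (hMte q hqM).2
      rcases Sym2.mem_iff.1 hx with rfl | rfl
      · -- x = w_e
        rcases hclass q.1 ⟨q.2, ht⟩ with ⟨v', hv'⟩ | ⟨e', he', u', hu', hf⟩
        · rw [hv'] at hxq; simp at hxq
        · rw [hf] at hxq
          have hee' : e = e' := by
            rcases Sym2.mem_iff.1 hxq with h | h
            · exact Sum.inr.inj h
            · simp at h
          subst hee'
          rw [hf, hlabE e he u' hu'] at ht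
          simp at ht
          rcases Sym2.mem_iff.1 hu' with rfl | rfl
          · -- q = star
            exact hstar_notM (by
              have : q = star := Prod.ext hf ht
              rwa [this] at hqM)
          · -- q conflicts with vert u'
            have hne2 : q ≠ vert u' := by
              intro h
              rw [h] at hf
              simp [vert, Sym2.eq_iff] at hf
            rcases hMind q hqM (vert u') hv hne2 with hd | ht2
            · refine hd (Sum.inl (u', aV c e)) (by rw [hf]; simp) ?_
              show Sum.inl (u', aV c e) ∈ s(Sum.inl (u', false), Sum.inl (u', true))
              cases aV c e <;> simp
            · rw [ht] at ht2
              simp only [vert] at ht2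
              omega
      · -- x = u_alpha : q conflicts with vert u
        rcases hMind q hqM (vert u) hu hqne with hd | ht2
        · exact hd _ hxq hstaru
        · have := hqtime q hqM
          simp only [vert] at ht2
          omega
    -- the new matching
    set M'' : Finset (Sym2 ((V × Bool) ⊕ Sym2 V) × ℕ) :=
      insert star (M.erase (vert u)) with hM''_def
    have hstar_ne : star ∉ M.erase (vert u) := fun h => hstar_notM (Finset.mem_of_mem_erase h)
    have hM''card : M''.card = M.card := by
      rw [hM''_def, Finset.card_insert_of_notMem hstar_ne, Finset.card_erase_of_mem hu]
      have := Finset.card_pos.2 ⟨_, hu⟩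
      omega
    have hM''tm : IsTM lab 2 M'' := by
      constructor
      · intro p hp
        rcases Finset.mem_insert.1 hp with rfl | hp
        · exact hstarte
        · exact hMte p (Finset.mem_of_mem_erase hp)
      · intro p hp q hq hne
        rcases Finset.mem_insert.1 hp with rfl | hp
        · rcases Finset.mem_insert.1 hq with rfl | hq
          · exact absurd rfl hne
          · exact Or.inl (fun x hx => hdis q hq x hx)
        · rcases Finset.mem_insert.1 hq with rfl | hq
          · exact Or.inl (fun x hxp hxs => hdis p hp x hxs hxp)
          · exact hMind p (Finset.mem_of_mem_erase hp) q (Finset.mem_of_mem_erase hq) hne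
    have hM''filter : (M''.filter (fun p => p.2 = 2)).card ≤ n := by
      have hstar2 : ¬ (star.2 = 2) := by simp only [hstar_def]; omega
      have h1 : M''.filter (fun p => p.2 = 2) =
          (M.filter (fun p => p.2 = 2)).erase (vert u) := by
        rw [hM''_def, Finset.filter_insert, if_neg hstar2, Finset.filter_erase]
      have h2 : vert u ∈ M.filter (fun p => p.2 = 2) := Finset.mem_filter.2 ⟨hu, rfl⟩
      rw [h1, Finset.card_erase_of_mem h2]
      have := Finset.card_pos.2 ⟨_, h2⟩
      omega
    obtain ⟨M', h1, h2, h3⟩ := ih M'' hM''filter hM''tm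
    exact ⟨M', h1, h2.trans hM''card, h3⟩
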